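/- Every finite block of a 2-Toeplitz sequence ā appears in ā with bounded gaps; more precisely, if (a_j,...,a_{j+r}) is a block of ā and b_i is the term of B of largest index occurring among a_j,...,a_{j+r}, then this block occurs (exactly, as a consecutive sub-block) within every block of 2^{i+1} consecutive terms of ā. -/

import Mathlib

open Set unitInterval

/-- The left shift `S` on sequences: `S(x₁,x₂,x₃,…) = (x₂,x₃,…)`. -/
def shiftSeq {X : Type*} (z : ℕ → X) : ℕ → X := fun n => z (n + 1)

/-- The closure of the forward shift-orbit `{z, Sz, S²z, …}` of a sequence `z`,
inside the sequence space `ℕ → X`.  (For a compact metric space `X` the product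
topology on `ℕ → X` is exactly the topology of the metric
`d̄(x̄,ȳ) = ∑ᵢ d(xᵢ,yᵢ)/2ⁱ`.) -/
def shiftOrbitClosure {X : Type*} [TopologicalSpace X] (z : ℕ → X) : Set (ℕ → X) :=
  closure (Set.range fun k => shiftSeq^[k] z)

/-- A sequence `z` is *minimal* if the closure of its shift-orbit is a minimal
dynamical system under the shift, i.e. every point of this closure has dense
forward orbit in it. -/
def IsMinimalSeq {X : Type*} [TopologicalSpace X] (z : ℕ → X) : Prop :=
  ∀ w ∈ shiftOrbitClosure z, shiftOrbitClosure z ⊆ shiftOrbitClosure w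

/-- The 2-Toeplitz sequence of `B = (b 0, b 1, …)` (all sequences 0-indexed):
its `n`-th term is `b p` where `2 ^ p` exactly divides `n + 1`; equivalently the
term at (1-indexed) position `j` is `b_i` for all `j ≡ 2^(i-1) (mod 2^i)`. -/
def toeplitz2 {X : Type*} (b : ℕ → X) : ℕ → X :=
  fun n => b (padicValNat 2 (n + 1))

/-- Every finite block of a 2-Toeplitz sequence appears with bounded gaps: if
`(a_j, …, a_{j+r})` is a block (0-indexed) of the 2-Toeplitz sequence `ā` of `b`,
and `b_i` (1-indexed, so `i = 1 + ` the largest 2-adic valuation occurring) is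
the term of `B` of largest index occurring in the block, then this block occurs
exactly as a consecutive sub-block within every block of `2^(i+1)` consecutive
terms of `ā`. -/

lemma val_eq_of_modeq {i a c : ℕ} (ha : a ≠ 0) (hc : c ≠ 0)
    (hmod : a ≡ c [MOD 2^i]) (hv : padicValNat 2 c < i) :
    padicValNat 2 a = padicValNat 2 c := by
  have pp : Nat.Prime 2 := Nat.prime_two
  have hvc : c.factorization 2 = padicValNat 2 c := Nat.factorization_def c pp
  have hva : a.factorization 2 = padicValNat 2 a := Nat.factorization_def a pp
  set p := padicValNat 2 c with hp
  have hdc : 2 ^ p ∣ c := by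
    rw [pp.pow_dvd_iff_le_factorization hc, hvc]
  have hndc : ¬ 2 ^ (p + 1) ∣ c := by
    rw [pp.pow_dvd_iff_le_factorization hc, hvc]; omega
  have hda : 2 ^ p ∣ a := by
    have h1 : a ≡ c [MOD 2 ^ p] := hmod.of_dvd (pow_dvd_pow 2 hv.le)
    exact Nat.modEq_zero_iff_dvd.mp (h1.trans (Nat.modEq_zero_iff_dvd.mpr hdc))
  have hnda : ¬ 2 ^ (p + 1) ∣ a := by
    intro hd
    have h1 : a ≡ c [MOD 2 ^ (p + 1)] := hmod.of_dvd (pow_dvd_pow 2 hv)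
    exact hndc (Nat.modEq_zero_iff_dvd.mp (h1.symm.trans (Nat.modEq_zero_iff_dvd.mpr hd)))
  have h1 := (pp.pow_dvd_iff_le_factorization ha).mp hda
  have h2 : ¬ p + 1 ≤ a.factorization 2 := fun h =>
    hnda ((pp.pow_dvd_iff_le_factorization ha).mpr h)
  omega

lemma exists_high_val (j r : ℕ) :
    r + 1 ≤ 2 ^ (((Finset.range (r + 1)).sup fun t => padicValNat 2 (j + t + 1)) + 1) := by
  have pp : Nat.Prime 2 := Nat.prime_two
  set k := Nat.log 2 (r + 1) with hk
  have h1 : 2 ^ k ≤ r + 1 := Nat.pow_log_le_self 2 (by omega)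
  have h2 : r + 1 < 2 ^ (k + 1) := Nat.lt_pow_succ_log_self (by norm_num) _
  set d := 2 ^ k with hd
  have hdpos : 0 < d := Nat.pow_pos (by norm_num)
  set n := ((j + d) / d) * d with hn
  have hn1 : j + 1 ≤ n := by
    have := Nat.lt_div_mul_add (a := j + d) hdpos
    omega
  have hn2 : n ≤ j + d := by rw [hn]; exact Nat.div_mul_le_self _ _
  have hdn : d ∣ n := Dvd.intro_left _ rfl
  set t := n - (j + 1) with ht
  have htr : t ≤ r := by omega
  have hvn : k ≤ padicValNat 2 (j + t + 1) := by
    have hjt : j + t + 1 = n := by omega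
    rw [hjt, ← Nat.factorization_def n pp,
      ← pp.pow_dvd_iff_le_factorization (by omega)]
    exact hdn
  have hsup : k ≤ (Finset.range (r + 1)).sup fun t => padicValNat 2 (j + t + 1) :=
    le_trans hvn (Finset.le_sup (f := fun t => padicValNat 2 (j + t + 1)) (Finset.mem_range.mpr (Nat.lt_succ_of_le htr)))
  exact le_of_lt (lt_of_lt_of_le h2 (Nat.pow_le_pow_right (by norm_num) (Nat.succ_le_succ hsup)))

theorem toeplitz2_block_appears_with_bounded_gaps
    {X : Type*} (b : ℕ → X) (j r : ℕ) (i : ℕ)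
    (hi : i = ((Finset.range (r + 1)).sup fun t => padicValNat 2 (j + t + 1)) + 1) :
    ∀ m : ℕ, ∃ s : ℕ, m ≤ s ∧ s + r + 1 ≤ m + 2 ^ (i + 1) ∧
      ∀ t ≤ r, toeplitz2 b (s + t) = toeplitz2 b (j + t) := by
  intro m
  have hiP : 0 < 2 ^ i := Nat.pow_pos (by norm_num)
  set s := m + (j + m * (2 ^ i - 1)) % 2 ^ i with hs
  have key : m + (j + m * (2 ^ i - 1)) = j + m * 2 ^ i := by
    obtain ⟨c, hc⟩ : ∃ c, 2 ^ i = c + 1 := ⟨2 ^ i - 1, by omega⟩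
    rw [hc]; simp [Nat.mul_add]; ring
  have hmods : s ≡ j [MOD 2 ^ i] := by
    calc s ≡ m + (j + m * (2 ^ i - 1)) [MOD 2 ^ i] :=
          (Nat.mod_modEq _ _).add_left m
      _ = j + m * 2 ^ i := key
      _ ≡ j + 0 [MOD 2 ^ i] :=
          Nat.ModEq.add_left j ((Nat.modEq_zero_iff_dvd).mpr ⟨m, mul_comm _ _⟩)
      _ = j := by omega
  have hr1 : r + 1 ≤ 2 ^ i := by rw [hi]; exact exists_high_val j r
  have hslt : s < m + 2 ^ i := by
    have := Nat.mod_lt (j + m * (2 ^ i - 1)) hiP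
    omega
  refine ⟨s, by omega, ?_, ?_⟩
  · have : 2 ^ (i + 1) = 2 ^ i + 2 ^ i := by rw [pow_succ]; omega
    omega
  · intro t htr
    have hv : padicValNat 2 (j + t + 1) < i := by
      rw [hi]
      exact Nat.lt_succ_of_le (Finset.le_sup (f := fun t => padicValNat 2 (j + t + 1))
        (Finset.mem_range.mpr (Nat.lt_succ_of_le htr)))
    have hmod : s + t + 1 ≡ j + t + 1 [MOD 2 ^ i] := hmods.add_right (t + 1)
    show b (padicValNat 2 (s + t + 1)) = b (padicValNat 2 (j + t + 1))
    rw [val_eq_of_modeq (by omega) (by omega) hmod hv]
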